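/- Let f and g be probability distributions on ℕ. Then the first-order Toscani distance is bounded by the first-order Wasserstein distance: D_1(f,g) ≤ W_1(f,g). -/

import Mathlib

set_option maxHeartbeats 1000000


open scoped ENNReal

noncomputable section

/-- `f` is a probability distribution on `ℕ`. -/
def IsProbN (f : ℕ → ℝ) : Prop := (∀ n, 0 ≤ f n) ∧ HasSum f 1

/-- `π` is a coupling of the probability distributions `f` and `g` on `ℕ`. -/
def IsCouplingN (π : ℕ → ℕ → ℝ) (f g : ℕ → ℝ) : Prop :=
  (∀ i j, 0 ≤ π i j) ∧ (∀ i, HasSum (fun j => π i j) (f i)) ∧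
    (∀ j, HasSum (fun i => π i j) (g j))

/-- The Wasserstein distance of order `p` between probability distributions on `ℕ`. -/
def WassersteinN (p : ℝ) (f g : ℕ → ℝ) : ℝ≥0∞ :=
  (⨅ π : {π : ℕ → ℕ → ℝ // IsCouplingN π f g},
    ∑' (i : ℕ) (j : ℕ), ENNReal.ofReal (π.1 i j) * ENNReal.ofReal (|(i : ℝ) - (j : ℝ)| ^ p)) ^ (1 / p)

/-- The probability generating function of `f`. -/
def pgfN (f : ℕ → ℝ) (z : ℝ) : ℝ := ∑' n : ℕ, z ^ n * f n

/-- The Toscani (Fourier-based) distance of order `s` between probability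
distributions on `ℕ`. -/
def ToscaniN (s : ℝ) (f g : ℕ → ℝ) : ℝ≥0∞ :=
  ⨆ z : Set.Ioo (0 : ℝ) 1, ENNReal.ofReal (|pgfN f z - pgfN g z| / (1 - (z : ℝ)) ^ s)

/-- Key elementary inequality: `|z^i - z^j| ≤ (1-z) * |i-j|` for `0 ≤ z ≤ 1`. -/
lemma aux_pow_diff_le {z : ℝ} (hz0 : 0 ≤ z) (hz1 : z ≤ 1) (i j : ℕ) :
    |z ^ i - z ^ j| ≤ (1 - z) * |(i : ℝ) - (j : ℝ)| := by
  wlog h : i ≤ j generalizing i j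
  · rw [abs_sub_comm, abs_sub_comm (i : ℝ)]
    exact this j i (le_of_not_ge h)
  have hji : z ^ j ≤ z ^ i := pow_le_pow_of_le_one hz0 hz1 h
  have h1 : z ^ i ≤ 1 := pow_le_one₀ hz0 hz1
  have hk1 : z ^ (j - i) ≤ 1 := pow_le_one₀ hz0 hz1
  have key : 1 + ((j - i : ℕ) : ℝ) * (z - 1) ≤ z ^ (j - i) :=
    one_add_mul_sub_le_pow (by linarith) _
  have hzz : z ^ i - z ^ j = z ^ i * (1 - z ^ (j - i)) := by
    rw [mul_sub, mul_one, ← pow_add]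
    congr 2
    omega
  have habs : |z ^ i - z ^ j| = z ^ i - z ^ j := abs_of_nonneg (by linarith)
  have hcast : |(i : ℝ) - (j : ℝ)| = ((j - i : ℕ) : ℝ) := by
    rw [abs_sub_comm, Nat.cast_sub h, abs_of_nonneg]
    have : (i : ℝ) ≤ (j : ℝ) := Nat.cast_le.2 h
    linarith
  have hznn : 0 ≤ z ^ i := pow_nonneg hz0 i
  rw [habs, hcast, hzz]
  nlinarith

/-- For probability distributions `f, g` on `ℕ`,
the first-order Toscani distance is bounded by the first-order Wasserstein
distance: `D₁(f,g) ≤ W₁(f,g)`. -/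
theorem toscani_one_le_wasserstein_one (f g : ℕ → ℝ) (hf : IsProbN f) (hg : IsProbN g) :
    ToscaniN 1 f g ≤ WassersteinN 1 f g := by
  rw [ToscaniN, WassersteinN]
  rw [show (1 : ℝ) / 1 = 1 by norm_num, ENNReal.rpow_one]
  apply iSup_le
  rintro ⟨z, hz0, hz1⟩
  apply le_iInf
  rintro ⟨π, hπnn, hπrow, hπcol⟩
  simp only []
  set C : ℝ≥0∞ := ∑' (i : ℕ) (j : ℕ),
      ENNReal.ofReal (π i j) * ENNReal.ofReal (|(i : ℝ) - (j : ℝ)| ^ (1 : ℝ)) with hC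
  have hz0' : (0 : ℝ) ≤ z := le_of_lt hz0
  have hz1' : z ≤ 1 := le_of_lt hz1
  have h1z : (0 : ℝ) < 1 - z := by linarith
  -- summability of the coupling
  have hπunc : Summable (fun p : ℕ × ℕ => π p.1 p.2) := by
    rw [summable_prod_of_nonneg (fun p => hπnn p.1 p.2)]
    refine ⟨fun i => (hπrow i).summable, ?_⟩
    have : (fun i => ∑' j, π i j) = f := by
      funext i; exact (hπrow i).tsum_eq
    rw [this]
    exact hf.2.summable
  have ha : Summable (fun p : ℕ × ℕ => z ^ p.1 * π p.1 p.2) := by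
    refine Summable.of_nonneg_of_le (fun p => mul_nonneg (pow_nonneg hz0' _) (hπnn _ _))
      (fun p => ?_) hπunc
    calc z ^ p.1 * π p.1 p.2 ≤ 1 * π p.1 p.2 :=
          mul_le_mul_of_nonneg_right (pow_le_one₀ hz0' hz1') (hπnn _ _)
      _ = π p.1 p.2 := one_mul _
  have hb : Summable (fun p : ℕ × ℕ => z ^ p.2 * π p.1 p.2) := by
    refine Summable.of_nonneg_of_le (fun p => mul_nonneg (pow_nonneg hz0' _) (hπnn _ _))
      (fun p => ?_) hπunc
    calc z ^ p.2 * π p.1 p.2 ≤ 1 * π p.1 p.2 :=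
          mul_le_mul_of_nonneg_right (pow_le_one₀ hz0' hz1') (hπnn _ _)
      _ = π p.1 p.2 := one_mul _
  have hbrow : ∀ i, Summable (fun j => z ^ j * π i j) := by
    intro i
    refine Summable.of_nonneg_of_le (fun j => mul_nonneg (pow_nonneg hz0' _) (hπnn _ _))
      (fun j => ?_) (hπrow i).summable
    calc z ^ j * π i j ≤ 1 * π i j :=
          mul_le_mul_of_nonneg_right (pow_le_one₀ hz0' hz1') (hπnn _ _)
      _ = π i j := one_mul _
  -- pgf of f as a sum over the coupling
  have hpf : pgfN f z = ∑' p : ℕ × ℕ, z ^ p.1 * π p.1 p.2 := by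
    rw [ha.tsum_prod' (fun i => (hπrow i).summable.mul_left (z ^ i))]
    unfold pgfN
    congr 1
    funext i
    simp only []
    rw [tsum_mul_left, (hπrow i).tsum_eq]
  -- pgf of g as a sum over the coupling
  have hpg : pgfN g z = ∑' p : ℕ × ℕ, z ^ p.2 * π p.1 p.2 := by
    rw [hb.tsum_prod' hbrow]
    rw [← Summable.tsum_comm' (f := fun i j => z ^ j * π i j) hb hbrow
      (fun j => (hπcol j).summable.mul_left (z ^ j))]
    unfold pgfN
    congr 1
    funext j
    rw [tsum_mul_left, (hπcol j).tsum_eq]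
  -- the difference
  have hdiff : pgfN f z - pgfN g z = ∑' p : ℕ × ℕ, (z ^ p.1 - z ^ p.2) * π p.1 p.2 := by
    rw [hpf, hpg]
    rw [← (ha.hasSum.sub hb.hasSum).tsum_eq]
    congr 1
    funext p
    ring
  have hsub : Summable (fun p : ℕ × ℕ => (z ^ p.1 - z ^ p.2) * π p.1 p.2) := by
    have := ha.sub hb
    convert this using 2 with p
    · rfl
    ring
  -- key bound in ENNReal
  have hkey : ENNReal.ofReal |pgfN f z - pgfN g z| ≤ ENNReal.ofReal (1 - z) * C := by
    rw [hdiff]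
    have hnorm : Summable (fun p : ℕ × ℕ => ‖(z ^ p.1 - z ^ p.2) * π p.1 p.2‖) := by
      simpa only [Real.norm_eq_abs] using hsub.abs
    have h1 : |∑' p : ℕ × ℕ, (z ^ p.1 - z ^ p.2) * π p.1 p.2|
        ≤ ∑' p : ℕ × ℕ, |(z ^ p.1 - z ^ p.2) * π p.1 p.2| := by
      have := norm_tsum_le_tsum_norm hnorm
      simpa only [Real.norm_eq_abs] using this
    calc ENNReal.ofReal |∑' p : ℕ × ℕ, (z ^ p.1 - z ^ p.2) * π p.1 p.2|
        ≤ ENNReal.ofReal (∑' p : ℕ × ℕ, |(z ^ p.1 - z ^ p.2) * π p.1 p.2|) :=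
          ENNReal.ofReal_le_ofReal h1
      _ = ∑' p : ℕ × ℕ, ENNReal.ofReal |(z ^ p.1 - z ^ p.2) * π p.1 p.2| :=
          ENNReal.ofReal_tsum_of_nonneg (fun p => abs_nonneg _) hsub.abs
      _ ≤ ∑' p : ℕ × ℕ, ENNReal.ofReal (1 - z) *
            (ENNReal.ofReal (π p.1 p.2) * ENNReal.ofReal (|(p.1 : ℝ) - (p.2 : ℝ)| ^ (1 : ℝ))) := by
          refine ENNReal.tsum_le_tsum fun p => ?_
          rw [Real.rpow_one, ← ENNReal.ofReal_mul (hπnn _ _), ← ENNReal.ofReal_mul h1z.le]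
          refine ENNReal.ofReal_le_ofReal ?_
          rw [abs_mul, abs_of_nonneg (hπnn _ _)]
          calc |z ^ p.1 - z ^ p.2| * π p.1 p.2
              ≤ ((1 - z) * |(p.1 : ℝ) - (p.2 : ℝ)|) * π p.1 p.2 :=
                mul_le_mul_of_nonneg_right (aux_pow_diff_le hz0' hz1' _ _) (hπnn _ _)
            _ = (1 - z) * (π p.1 p.2 * |(p.1 : ℝ) - (p.2 : ℝ)|) := by ring
      _ = ENNReal.ofReal (1 - z) * C := by
          rw [ENNReal.tsum_mul_left, hC, ← ENNReal.tsum_prod]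
  -- conclude
  rw [show ((z : ℝ)) = z from rfl]
  have : ENNReal.ofReal (|pgfN f z - pgfN g z| / (1 - z) ^ (1 : ℝ))
      = ENNReal.ofReal |pgfN f z - pgfN g z| / ENNReal.ofReal (1 - z) := by
    rw [Real.rpow_one, ENNReal.ofReal_div_of_pos h1z]
  rw [this]
  rw [ENNReal.div_le_iff_le_mul (Or.inl (by simp only [ne_eq, ENNReal.ofReal_eq_zero, not_le]; linarith)) (Or.inl ENNReal.ofReal_ne_top)]
  rw [mul_comm]
  exact hkey

end
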